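/- For a prime p and integers r ≥ 1, a ≥ b ≥ 0, the binomial coefficient C(p^r·a, p^r·b) is congruent to C(p^(r-1)·a, p^(r-1)·b) modulo p^(2r). -/

import Mathlib

open Finset

-- factorial as product over Ioc
lemma aux_fact_prod (a t : ℕ) : Nat.factorial (a + t) = a.factorial * ∏ i ∈ Finset.Ioc a (a + t), i := by
  induction t with
  | zero => simp
  | succ t ih =>
      rw [show a + (t+1) = (a + t) + 1 by omega,
        Finset.prod_Ioc_succ_top (by omega), Nat.factorial_succ, ih]
      ring

lemma aux_L1 (p : ℕ) (hp : 0 < p) (m : ℕ) :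
    Nat.factorial (p * m) = p ^ m * m.factorial *
      ∏ i ∈ (Finset.Ioc 0 (p * m)).filter (fun i => ¬ p ∣ i), i := by
  induction m with
  | zero => simp
  | succ m ih =>
      have hsplit : Finset.Ioc 0 (p * (m+1)) = Finset.Ioc 0 (p*m) ∪ Finset.Ioc (p*m) (p*m + p) := by
        rw [show p * (m+1) = p*m + p by ring]
        rw [Finset.Ioc_union_Ioc_eq_Ioc (by omega) (by omega)]
      have hdisj : Disjoint ((Finset.Ioc 0 (p*m)).filter (fun i => ¬ p ∣ i))
          ((Finset.Ioc (p*m) (p*m + p)).filter (fun i => ¬ p ∣ i)) := by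
        apply Finset.disjoint_filter_filter
        rw [Finset.disjoint_left]
        intro x hx hx'
        simp only [Finset.mem_Ioc] at hx hx'
        omega
      have hftop : (Finset.Ioc (p*m) (p*m + p)).filter (fun i => ¬ p ∣ i)
          = (Finset.Ioc (p*m) (p*m + p)).erase (p*m + p) := by
        ext i
        simp only [Finset.mem_filter, Finset.mem_erase, Finset.mem_Ioc]
        constructor
        · rintro ⟨hi, hnd⟩
          refine ⟨fun h => hnd ?_, hi⟩
          · rw [h]; exact ⟨m+1, by ring⟩
        · rintro ⟨hne, hi⟩
          refine ⟨hi, fun hdvd => hne ?_⟩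
          obtain ⟨k, rfl⟩ := hdvd
          have hk : k = m + 1 := by
            have h1 : m < k := by
              by_contra h
              exact absurd (Nat.mul_le_mul_left p (by omega : k ≤ m)) (by omega)
            have h2 : k ≤ m + 1 := by
              by_contra h
              have := Nat.mul_le_mul_left p (by omega : m + 2 ≤ k)
              have hexp : p*(m+2) = p*m + 2*p := by ring
              omega
            omega
          rw [hk]; ring
      have herase : (p*m + p) * ∏ i ∈ (Finset.Ioc (p*m) (p*m + p)).erase (p*m + p), i
          = ∏ i ∈ Finset.Ioc (p*m) (p*m + p), i :=
        Finset.mul_prod_erase (Finset.Ioc (p*m) (p*m + p)) (fun i => i)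
          (by simp [Finset.mem_Ioc]; omega)
      rw [hsplit, Finset.filter_union, Finset.prod_union hdisj, hftop]
      have hfact : Nat.factorial (p * (m+1)) = Nat.factorial (p*m) * ∏ i ∈ Finset.Ioc (p*m) (p*m+p), i := by
        rw [show p * (m+1) = p*m + p by ring] at *
        exact aux_fact_prod (p*m) p
      rw [hfact, ih, ← herase, Nat.factorial_succ, pow_succ]
      rw [show p*m + p = p * (m+1) by ring]
      ring

lemma aux_shift (p d m : ℕ) (hp : 0 < p) :
    ∏ i ∈ (Finset.Ioc 0 (p*d + p*m)).filter (fun i => ¬ p ∣ i), i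
      = (∏ i ∈ (Finset.Ioc 0 (p*d)).filter (fun i => ¬ p ∣ i), i) *
        ∏ i ∈ (Finset.Ioc 0 (p*m)).filter (fun i => ¬ p ∣ i), (p*d + i) := by
  have hsplit : Finset.Ioc 0 (p*d + p*m) = Finset.Ioc 0 (p*d) ∪ Finset.Ioc (p*d) (p*d + p*m) := by
    rw [Finset.Ioc_union_Ioc_eq_Ioc (by omega) (by omega)]
  have hdisj : Disjoint ((Finset.Ioc 0 (p*d)).filter (fun i => ¬ p ∣ i))
      ((Finset.Ioc (p*d) (p*d + p*m)).filter (fun i => ¬ p ∣ i)) := by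
    rw [Finset.disjoint_left]
    intro x hx hx'
    simp only [Finset.mem_filter, Finset.mem_Ioc] at hx hx'
    omega
  have himg : Finset.Ioc (p*d) (p*d + p*m) = Finset.image (fun i => p*d + i) (Finset.Ioc 0 (p*m)) := by
    ext x
    simp only [Finset.mem_Ioc, Finset.mem_image]
    constructor
    · intro hx; exact ⟨x - p*d, by omega⟩
    · rintro ⟨i, hi, rfl⟩; omega
  have hinj : ∀ x ∈ Finset.Ioc 0 (p*m), ∀ y ∈ Finset.Ioc 0 (p*m),
      p*d + x = p*d + y → x = y := by intro x _ y _ h; omega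
  rw [hsplit, Finset.filter_union, Finset.prod_union hdisj, himg]
  congr 1
  rw [Finset.filter_image]
  have hfil : (Finset.Ioc 0 (p*m)).filter (fun a => ¬ p ∣ (p*d + a))
      = (Finset.Ioc 0 (p*m)).filter (fun i => ¬ p ∣ i) := by
    apply Finset.filter_congr
    intro x _
    rw [Nat.dvd_add_right ⟨d, rfl⟩]
  rw [hfil, Finset.prod_image (fun x hx y hy h => hinj x (Finset.mem_of_mem_filter x hx) y
    (Finset.mem_of_mem_filter y hy) h)]

lemma keyNat (p n m : ℕ) (hp : 0 < p) (hmn : m ≤ n) :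
    (p*n).choose (p*m) * ∏ i ∈ (Finset.Ioc 0 (p*m)).filter (fun i => ¬ p ∣ i), i
      = n.choose m * ∏ i ∈ (Finset.Ioc 0 (p*m)).filter (fun i => ¬ p ∣ i), (p*(n-m) + i) := by
  have h1 : (p*n).choose (p*m) * Nat.factorial (p*m) * Nat.factorial (p*(n-m)) = Nat.factorial (p*n) := by
    have := Nat.choose_mul_factorial_mul_factorial (Nat.mul_le_mul_left p hmn)
    rwa [show p*n - p*m = p*(n-m) from (Nat.mul_sub p n m).symm] at this
  rw [aux_L1 p hp m, aux_L1 p hp (n-m), aux_L1 p hp n] at h1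
  have hnn : p*n = p*(n-m) + p*m := by
    rw [← Nat.mul_add]; congr 1; omega
  rw [hnn, aux_shift p (n-m) m hp, ← hnn] at h1
  rw [show Nat.factorial n = n.choose m * Nat.factorial m * Nat.factorial (n-m) from
    (Nat.choose_mul_factorial_mul_factorial hmn).symm] at h1
  -- now cancel the common positive factor
  set Pm := ∏ i ∈ (Finset.Ioc 0 (p*m)).filter (fun i => ¬ p ∣ i), i with hPm
  set Pd := ∏ i ∈ (Finset.Ioc 0 (p*(n-m))).filter (fun i => ¬ p ∣ i), i with hPd
  set Q := ∏ i ∈ (Finset.Ioc 0 (p*m)).filter (fun i => ¬ p ∣ i), (p*(n-m) + i) with hQ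
  have hKpos : 0 < p ^ n * Nat.factorial m * Nat.factorial (n-m) * Pd := by
    have hPdpos : 0 < Pd := by
      apply Finset.prod_pos
      intro i hi
      simp only [Finset.mem_filter, Finset.mem_Ioc] at hi
      omega
    positivity
  apply Nat.eq_of_mul_eq_mul_right hKpos
  have hpow : p ^ n = p ^ m * p ^ (n-m) := by
    rw [← pow_add]; congr 1; omega
  calc (p*n).choose (p*m) * Pm * (p ^ n * Nat.factorial m * Nat.factorial (n-m) * Pd)
      = (p*n).choose (p*m) * (p ^ m * Nat.factorial m * Pm) *
          (p ^ (n-m) * Nat.factorial (n-m) * Pd) := by rw [hpow]; ring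
    _ = p ^ n * (n.choose m * Nat.factorial m * Nat.factorial (n-m)) * (Pd * Q) := h1
    _ = n.choose m * Q * (p ^ n * Nat.factorial m * Nat.factorial (n-m) * Pd) := by ring

lemma prod_add_sq_zero {R : Type*} [CommRing R] (x : R) (hx : x * x = 0)
    (s : Finset ℕ) (f : ℕ → R) :
    ∏ i ∈ s, (x + f i) = ∏ i ∈ s, f i + x * ∑ i ∈ s, ∏ j ∈ s.erase i, f j := by
  classical
  induction s using Finset.induction_on with
  | empty => simp
  | insert a s ha ih =>
      rw [Finset.prod_insert ha, ih, Finset.prod_insert ha]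
      have hsum : ∑ i ∈ insert a s, ∏ j ∈ (insert a s).erase i, f j
          = ∏ j ∈ s, f j + f a * ∑ i ∈ s, ∏ j ∈ s.erase i, f j := by
        rw [Finset.sum_insert ha, Finset.erase_insert ha, Finset.mul_sum]
        congr 1
        apply Finset.sum_congr rfl
        intro i hi
        rw [Finset.erase_insert_of_ne (by rintro rfl; exact ha hi),
          Finset.prod_insert (fun h => ha (Finset.mem_of_mem_erase h))]
      rw [hsum]
      linear_combination (∑ i ∈ s, ∏ j ∈ s.erase i, f j) * hx

lemma pr_mul_eq_zero (p r : ℕ) (hp : p.Prime) (y : ZMod (p^(2*r)))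
    (h : (ZMod.castHom (pow_dvd_pow p (by omega : r ≤ 2*r)) (ZMod (p^r))) y = 0) :
    ((p^r : ℕ) : ZMod (p^(2*r))) * y = 0 := by
  haveI : NeZero (p^(2*r)) := ⟨pow_ne_zero _ hp.pos.ne'⟩
  haveI : NeZero (p^r) := ⟨pow_ne_zero _ hp.pos.ne'⟩
  obtain ⟨n, rfl⟩ := ZMod.natCast_zmod_surjective y
  rw [map_natCast, ZMod.natCast_eq_zero_iff] at h
  obtain ⟨k, rfl⟩ := h
  rw [← Nat.cast_mul, show p^r * (p^r * k) = p^(2*r) * k from by rw [← mul_assoc, ← pow_add, two_mul],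
    Nat.cast_mul, ZMod.natCast_self, zero_mul]

lemma sum_inv_zero (p r b : ℕ) (hp : p.Prime) (hr : 1 ≤ r)
    (hnf : ∀ i, 0 < i → i ≤ p^r*b → ¬ p ∣ i → 2*i ≠ p^r*b) :
    ∑ i ∈ (Finset.Ioc 0 (p^r*b)).filter (fun i => ¬ p ∣ i),
      ∏ j ∈ ((Finset.Ioc 0 (p^r*b)).filter (fun i => ¬ p ∣ i)).erase i, (j : ZMod (p^r)) = 0 := by
  set N := p^r*b with hN
  set S := (Finset.Ioc 0 N).filter (fun i => ¬ p ∣ i) with hS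
  have hpN : p ∣ N := Dvd.dvd.mul_right (dvd_pow_self p (by omega)) b
  have hmem : ∀ i, i ∈ S ↔ (0 < i ∧ i ≤ N ∧ ¬ p ∣ i) := by
    intro i
    simp only [hS, Finset.mem_filter, Finset.mem_Ioc]
    tauto
  have hNc : ((N : ℕ) : ZMod (p^r)) = 0 := by
    rw [hN, Nat.cast_mul, ZMod.natCast_self, zero_mul]
  have g_mem : ∀ i ∈ S, N - i ∈ S := by
    intro i hi
    rw [hmem] at hi ⊢
    obtain ⟨h1, h2, h3⟩ := hi
    have hne : i ≠ N := by rintro rfl; exact h3 hpN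
    refine ⟨by omega, by omega, fun hdd => h3 ?_⟩
    have : p ∣ N - (N - i) := Nat.dvd_sub hpN hdd
    rwa [show N - (N - i) = i from by omega] at this
  refine Finset.sum_involution (fun i _ => N - i) ?_ ?_ g_mem ?_
  · -- f i + f (N - i) = 0
    intro i hi
    have hiS := hi
    rw [hmem] at hiS
    obtain ⟨h1, h2, h3⟩ := hiS
    have hu : IsUnit ((i : ℕ) : ZMod (p^r)) := by
      rw [ZMod.isUnit_iff_coprime]
      exact ((hp.coprime_iff_not_dvd.mpr h3).symm).pow_right r
    have hB1 : ((i : ℕ) : ZMod (p^r)) * ∏ j ∈ S.erase i, (j : ZMod (p^r))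
        = ∏ j ∈ S, (j : ZMod (p^r)) := Finset.mul_prod_erase S _ hi
    have hB2 : (((N - i : ℕ)) : ZMod (p^r)) * ∏ j ∈ S.erase (N - i), (j : ZMod (p^r))
        = ∏ j ∈ S, (j : ZMod (p^r)) := Finset.mul_prod_erase S _ (g_mem i hi)
    have hneg : ((i : ℕ) : ZMod (p^r)) = -(((N - i : ℕ)) : ZMod (p^r)) := by
      have : ((i : ℕ) : ZMod (p^r)) + (((N - i : ℕ)) : ZMod (p^r)) = 0 := by
        rw [← Nat.cast_add, show i + (N - i) = N from by omega, hNc]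
      linear_combination this
    show (∏ j ∈ S.erase i, (j : ZMod (p^r))) + (∏ j ∈ S.erase (N - i), (j : ZMod (p^r))) = 0
    apply hu.mul_left_cancel
    rw [mul_zero, mul_add, hB1]
    rw [hneg, neg_mul, hB2]
    ring
  · -- no fixed points (needed when f ≠ 0)
    intro i hi _
    rw [hmem] at hi
    show N - i ≠ i
    intro hfix
    exact hnf i hi.1 hi.2.1 hi.2.2 (by omega)
  · -- involution
    intro i hi
    rw [hmem] at hi
    show N - (N - i) = i
    omega

/-- For a prime `p` and integers `r ≥ 1`, `a ≥ b ≥ 0`, the binomial coefficient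
`C(p^r·a, p^r·b)` is congruent to `C(p^(r-1)·a, p^(r-1)·b)` modulo `p^(2r)`. -/
theorem binom_congr_mod_p_pow (p r a b : ℕ) (hp : p.Prime) (hr : 1 ≤ r) (hba : b ≤ a) :
    (p ^ r * a).choose (p ^ r * b) ≡ (p ^ (r - 1) * a).choose (p ^ (r - 1) * b)
      [MOD p ^ (2 * r)] := by
  haveI : NeZero (p ^ (2*r)) := ⟨pow_ne_zero _ hp.pos.ne'⟩
  haveI : NeZero (p ^ r) := ⟨pow_ne_zero _ hp.pos.ne'⟩
  set n := p^(r-1)*a with hn'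
  set m := p^(r-1)*b with hm'
  set c := a - b with hc'
  have hpr : p^r = p * p^(r-1) := by
    conv_lhs => rw [show r = (r-1)+1 from by omega]
    rw [pow_succ']
  have key := keyNat p n m hp.pos (Nat.mul_le_mul_left _ hba)
  have hn : p * n = p^r * a := by rw [hpr, hn']; ring
  have hm : p * m = p^r * b := by rw [hpr, hm']; ring
  have hd : p * (n - m) = p^r * c := by
    rw [hn', hm', ← Nat.mul_sub, hpr, hc']; ring
  rw [hn, hm, hd] at key
  set C1 := (p^r*a).choose (p^r*b) with hC1
  set C0 := (p^(r-1)*a).choose (p^(r-1)*b) with hC0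
  rw [← ZMod.natCast_eq_natCast_iff]
  set R := ZMod (p^(2*r)) with hR
  letI : CommRing R := ZMod.commRing _
  set T := (Finset.Ioc 0 (p^r*b)).filter (fun i => ¬ p ∣ i) with hT
  -- cast key to R
  have keyR : (C1 : R) * ∏ i ∈ T, (i : R)
      = (C0 : R) * ∏ i ∈ T, (((p^r*c : ℕ) : R) + (i : R)) := by
    have h := congrArg (fun t : ℕ => (t : R)) key
    simp only [Nat.cast_mul, Nat.cast_prod, Nat.cast_add] at h
    rw [Nat.cast_mul]
    exact h
  have hx : ((p^r*c : ℕ) : R) * ((p^r*c : ℕ) : R) = 0 := by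
    rw [← Nat.cast_mul, show (p^r*c)*(p^r*c) = p^(2*r)*(c*c) from by
      rw [two_mul, pow_add]; ring, Nat.cast_mul, ZMod.natCast_self, zero_mul]
  rw [prod_add_sq_zero _ hx] at keyR
  -- the correction term vanishes
  have hdvd : p^r ∣ p^(2*r) := pow_dvd_pow p (by omega)
  have hzero : (C0 : R) * (((p^r*c : ℕ) : R) *
      ∑ i ∈ T, ∏ j ∈ T.erase i, (j : R)) = 0 := by
    have heq : (C0 : R) * (((p^r*c : ℕ) : R) * ∑ i ∈ T, ∏ j ∈ T.erase i, (j : R))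
        = ((p^r : ℕ) : R) * ((C0 : R) * ((c : ℕ) : R) *
            ∑ i ∈ T, ∏ j ∈ T.erase i, (j : R)) := by
      rw [Nat.cast_mul]
      push_cast
      ring
    rw [heq]
    apply pr_mul_eq_zero p r hp
    have hmap : (ZMod.castHom (pow_dvd_pow p (by omega : r ≤ 2*r)) (ZMod (p^r)))
        ((C0 : R) * ((c : ℕ) : R) * ∑ i ∈ T, ∏ j ∈ T.erase i, (j : R))
        = (C0 : ZMod (p^r)) * ((c : ℕ) : ZMod (p^r)) *
            ∑ i ∈ T, ∏ j ∈ T.erase i, (j : ZMod (p^r)) := by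
      simp [map_mul, map_sum, map_prod, map_natCast]
    rw [hmap]
    -- case analysis
    by_cases hp2 : p = 2
    · subst hp2
      by_cases hr2 : 2 ≤ r
      · -- r ≥ 2: no fixed point
        rw [hT, sum_inv_zero 2 r b hp hr ?_, mul_zero]
        intro i _ _ hndvd heq2
        have h2r : 2^r = 2*2^(r-1) := by
          conv_lhs => rw [show r = (r-1)+1 from by omega]
          rw [pow_succ']
        have hi2 : i = 2^(r-1)*b := by omega
        have : (2:ℕ) ∣ 2^(r-1) := dvd_pow_self 2 (by omega)
        exact hndvd (hi2 ▸ this.mul_right b)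
      · -- r = 1
        have hr1 : r = 1 := by omega
        subst hr1
        by_cases hb2 : 2 ∣ b
        · rw [hT, sum_inv_zero 2 1 b hp le_rfl ?_, mul_zero]
          intro i _ _ hndvd heq2
          have hi2 : i = b := by omega
          exact hndvd (hi2 ▸ hb2)
        · by_cases hc2 : 2 ∣ c
          · have : ((c : ℕ) : ZMod (2^1)) = 0 := by
              rw [ZMod.natCast_eq_zero_iff]
              simpa using hc2
            rw [this, mul_zero, zero_mul]
          · -- b odd, c odd, so a even and 2 ∣ C(a,b)
            have hb1 : 1 ≤ b := by omega
            have ha2 : 2 ∣ a := by omega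
            have hdvdC : 2 ∣ C0 := by
              have hid : a * (a-1).choose (b-1) = a.choose b * b := by
                have := Nat.add_one_mul_choose_eq (a-1) (b-1)
                rw [show a - 1 + 1 = a from by omega, show b - 1 + 1 = b from by omega] at this
                exact this
              have h2 : 2 ∣ a.choose b * b := hid ▸ ha2.mul_right _
              have := (Nat.Prime.dvd_mul Nat.prime_two).mp h2
              have hC0ab : C0 = a.choose b := by rw [hC0]; norm_num
              rw [hC0ab]
              tauto
            have : (C0 : ZMod (2^1)) = 0 := by
              rw [ZMod.natCast_eq_zero_iff]
              simpa using hdvdC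
            rw [this, zero_mul, zero_mul]
    · -- p odd
      rw [hT, sum_inv_zero p r b hp hr ?_, mul_zero]
      intro i _ _ hndvd heq2
      have hpN : p ∣ p^r*b := (dvd_pow_self p (by omega)).mul_right b
      have hp2i : p ∣ 2*i := heq2 ▸ hpN
      rcases (Nat.Prime.dvd_mul hp).mp hp2i with h | h
      · exact hp2 ((Nat.prime_dvd_prime_iff_eq hp Nat.prime_two).mp h)
      · exact hndvd h
  rw [mul_add, hzero, add_zero] at keyR
  have hBunit : IsUnit (∏ i ∈ T, (i : R)) := by
    apply Finset.prod_induction _ IsUnit (fun x y hx hy => hx.mul hy) isUnit_one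
    intro i hi
    rw [hT, Finset.mem_filter] at hi
    rw [ZMod.isUnit_iff_coprime]
    exact ((hp.coprime_iff_not_dvd.mpr hi.2).symm).pow_right (2*r)
  exact hBunit.mul_right_cancel keyR
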